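/- Consider a single LSTM layer with cell update c⁺ = f∘c + i∘r, where f = σ(W_f u + U_f h + b_f), i = σ(W_i u + U_i h + b_i), r = φ(W_r u + U_r h + b_r). Define σ̄_f = σ(M_f), σ̄_i = σ(M_i), φ̄_r = tanh(M_r) with M_* the maximum row ℓ¹ norm of [W_* U_* b_*], c̄ = σ̄_i φ̄_r/(1−σ̄_f), ᾱ = (1/4) c̄ ‖U_f‖₂ + σ̄_i ‖U_r‖₂ + (1/4) φ̄_r ‖U_i‖₂, and β̄ = (1/4) c̄ ‖W_f‖₂ + σ̄_i ‖W_r‖₂ + (1/4) φ̄_r ‖W_i‖₂. Then for any two triples (c_a, h_a, u_a) and (c_b, h_b, u_b) with ‖c_a‖∞ ≤ c̄, ‖c_b‖∞ ≤ c̄, ‖h_a‖∞ ≤ 1, ‖h_b‖∞ ≤ 1, ‖u_a‖∞ ≤ 1, ‖u_b‖∞ ≤ 1, the updated cell states satisfy ‖c_a⁺ − c_b⁺‖₂ ≤ σ̄_f ‖c_a − c_b‖₂ + ᾱ ‖h_a − h_b‖₂ + β̄ ‖u_a − u_b‖₂. -/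

import Mathlib

/-- The sigmoid activation function `σ(x) = 1/(1+e^{-x})`. -/
noncomputable def sigm (x : ℝ) : ℝ := 1 / (1 + Real.exp (-x))

/-- The maximum over rows of the ℓ¹ norm of the rows of the augmented matrix `[W U b]`. -/
noncomputable def augRowMax {n m p : ℕ} (W : Matrix (Fin n) (Fin m) ℝ)
    (U : Matrix (Fin n) (Fin p) ℝ) (b : Fin n → ℝ) : ℝ :=
  ⨆ j, (∑ i, |W j i| + ∑ i, |U j i| + |b j|)

/-- The Euclidean norm of a vector in `ℝ^n`. -/
noncomputable def norm2 {n : ℕ} (v : Fin n → ℝ) : ℝ := Real.sqrt (∑ i, (v i) ^ 2)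

/-- The spectral (induced 2-) norm of a real matrix. -/
noncomputable def opNorm2 {n m : ℕ} (A : Matrix (Fin n) (Fin m) ℝ) : ℝ :=
  ‖LinearMap.toContinuousLinearMap (Matrix.toEuclideanLin A)‖

/-- Incremental bound on the LSTM cell-state update `c⁺ = f∘c + i∘r`:
`‖c_a⁺ − c_b⁺‖₂ ≤ σ̄_f ‖c_a − c_b‖₂ + ᾱ ‖h_a − h_b‖₂ + β̄ ‖u_a − u_b‖₂`. -/
lemma one_add_exp_pos (x : ℝ) : 0 < 1 + Real.exp (-x) := by positivity

lemma sigm_pos (x : ℝ) : 0 < sigm x := by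
  unfold sigm; positivity

lemma sigm_lt_one (x : ℝ) : sigm x < 1 := by
  unfold sigm
  rw [div_lt_one (one_add_exp_pos x)]
  linarith [Real.exp_pos (-x)]

lemma sigm_mono {x y : ℝ} (h : x ≤ y) : sigm x ≤ sigm y := by
  unfold sigm
  apply div_le_div_of_nonneg_left (by norm_num) (one_add_exp_pos y)
  have := Real.exp_le_exp.mpr (neg_le_neg h)
  linarith

lemma sigm_hasDerivAt (x : ℝ) :
    HasDerivAt sigm (Real.exp (-x) / (1 + Real.exp (-x)) ^ 2) x := by
  have h1 : HasDerivAt (fun x : ℝ => 1 + Real.exp (-x)) (-Real.exp (-x)) x := by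
    have h2 : HasDerivAt (fun x : ℝ => Real.exp (-x)) (Real.exp (-x) * (-1)) x :=
      (Real.hasDerivAt_exp (-x)).comp x (hasDerivAt_neg x)
    exact ((hasDerivAt_const x (1:ℝ)).add h2).congr_deriv (by ring)
  have := h1.inv (ne_of_gt (one_add_exp_pos x))
  have heq : sigm = fun x : ℝ => (1 + Real.exp (-x))⁻¹ := by
    funext z; simp [sigm, one_div]
  rw [heq]
  exact this.congr_deriv (by ring)

lemma sigm_lipschitz (x y : ℝ) : |sigm x - sigm y| ≤ (1/4) * |x - y| := by
  have := Convex.norm_image_sub_le_of_norm_hasDerivWithin_le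
    (f := sigm) (f' := fun x => Real.exp (-x) / (1 + Real.exp (-x)) ^ 2)
    (C := 1/4) (s := Set.univ)
    (fun z _ => (sigm_hasDerivAt z).hasDerivWithinAt)
    (fun z _ => by
      have hz := Real.exp_pos (-z)
      rw [Real.norm_eq_abs, abs_of_nonneg (by positivity)]
      rw [div_le_iff₀ (by positivity)]
      nlinarith [sq_nonneg (1 - Real.exp (-z))])
    convex_univ (Set.mem_univ y) (Set.mem_univ x)
  simpa [Real.norm_eq_abs, abs_sub_comm] using this

lemma tanh_eq_sigm (x : ℝ) : Real.tanh x = 2 * sigm (2 * x) - 1 := by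
  rw [Real.tanh_eq_sinh_div_cosh, Real.sinh_eq, Real.cosh_eq, sigm]
  have h1 := Real.exp_pos x
  have h2 := Real.exp_pos (-x)
  have h3 := one_add_exp_pos (2 * x)
  have key : Real.exp (-(2 * x)) = Real.exp (-x) * Real.exp (-x) := by
    rw [← Real.exp_add]; ring_nf
  have key2 : Real.exp (-x) * Real.exp x = 1 := by
    rw [← Real.exp_add]; simp
  rw [key] at h3 ⊢
  field_simp
  nlinarith [key2]
lemma tanh_mono {x y : ℝ} (h : x ≤ y) : Real.tanh x ≤ Real.tanh y := by
  rw [tanh_eq_sigm, tanh_eq_sigm]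
  have := sigm_mono (by linarith : 2 * x ≤ 2 * y)
  linarith

lemma tanh_zero' : Real.tanh 0 = 0 := by
  rw [tanh_eq_sigm]
  simp [sigm]
  norm_num

lemma tanh_neg' (x : ℝ) : Real.tanh (-x) = -Real.tanh x := by
  rw [Real.tanh_eq_sinh_div_cosh, Real.tanh_eq_sinh_div_cosh, Real.sinh_neg,
    Real.cosh_neg, neg_div]

lemma tanh_lipschitz (x y : ℝ) : |Real.tanh x - Real.tanh y| ≤ |x - y| := by
  rw [tanh_eq_sigm, tanh_eq_sigm]
  have h := sigm_lipschitz (2 * x) (2 * y)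
  have h2 : |2 * x - 2 * y| = 2 * |x - y| := by
    rw [show (2:ℝ) * x - 2 * y = 2 * (x - y) by ring, abs_mul, abs_two]
  calc |2 * sigm (2*x) - 1 - (2 * sigm (2*y) - 1)| = 2 * |sigm (2*x) - sigm (2*y)| := by
        rw [show 2 * sigm (2*x) - 1 - (2 * sigm (2*y) - 1) = 2 * (sigm (2*x) - sigm (2*y)) by ring,
          abs_mul, abs_two]
    _ ≤ |x - y| := by rw [h2] at h; linarith

lemma abs_tanh_le {x M : ℝ} (h : |x| ≤ M) : |Real.tanh x| ≤ Real.tanh M := by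
  rw [abs_le] at h
  rw [abs_le]
  constructor
  · rw [← tanh_neg']; exact tanh_mono (by linarith)
  · exact tanh_mono h.2

lemma norm2_nonneg {n : ℕ} (v : Fin n → ℝ) : 0 ≤ norm2 v := Real.sqrt_nonneg _

lemma norm2_mono {n : ℕ} {u v : Fin n → ℝ} (h : ∀ j, |u j| ≤ |v j|) :
    norm2 u ≤ norm2 v := by
  apply Real.sqrt_le_sqrt
  apply Finset.sum_le_sum
  intro j _
  rw [← sq_abs (u j), ← sq_abs (v j)]
  exact pow_le_pow_left₀ (abs_nonneg _) (h j) 2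

lemma norm2_smul {n : ℕ} (a : ℝ) (v : Fin n → ℝ) :
    norm2 (fun j => a * v j) = |a| * norm2 v := by
  unfold norm2
  rw [← Real.sqrt_sq_eq_abs, ← Real.sqrt_mul (sq_nonneg a), Finset.mul_sum]
  congr 1
  apply Finset.sum_congr rfl
  intro j _
  ring

lemma norm2_bound {n : ℕ} {u v : Fin n → ℝ} {a : ℝ} (ha : 0 ≤ a)
    (h : ∀ j, |u j| ≤ a * |v j|) : norm2 u ≤ a * norm2 v := by
  calc norm2 u ≤ norm2 (fun j => a * v j) := by
        apply norm2_mono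
        intro j
        rw [abs_mul, abs_of_nonneg ha]
        exact h j
    _ = a * norm2 v := by rw [norm2_smul, abs_of_nonneg ha]

lemma norm2_eq_norm {n : ℕ} (v : Fin n → ℝ) :
    norm2 v = ‖(WithLp.equiv 2 (Fin n → ℝ)).symm v‖ := by
  rw [EuclideanSpace.norm_eq]
  unfold norm2
  congr 1
  apply Finset.sum_congr rfl
  intro j _
  rw [Real.norm_eq_abs, sq_abs]; rfl

lemma norm2_add_le {n : ℕ} (u v : Fin n → ℝ) :
    norm2 (fun j => u j + v j) ≤ norm2 u + norm2 v := by
  rw [norm2_eq_norm, norm2_eq_norm, norm2_eq_norm]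
  have : (WithLp.equiv 2 (Fin n → ℝ)).symm (fun j => u j + v j) =
      (WithLp.equiv 2 (Fin n → ℝ)).symm u + (WithLp.equiv 2 (Fin n → ℝ)).symm v := rfl
  rw [this]
  exact norm_add_le _ _

lemma norm2_mulVec_le {n m : ℕ} (A : Matrix (Fin n) (Fin m) ℝ) (x : Fin m → ℝ) :
    norm2 (A.mulVec x) ≤ opNorm2 A * norm2 x := by
  rw [norm2_eq_norm, norm2_eq_norm]
  have key : (LinearMap.toContinuousLinearMap (Matrix.toEuclideanLin A))
      ((WithLp.equiv 2 (Fin m → ℝ)).symm x) = (WithLp.equiv 2 (Fin n → ℝ)).symm (A.mulVec x) := by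
    simp [LinearMap.coe_toContinuousLinearMap', Matrix.toEuclideanLin_apply_piLp_toLp]
  rw [← key]
  exact (LinearMap.toContinuousLinearMap (Matrix.toEuclideanLin A)).le_opNorm _
lemma le_augRowMax {n m p : ℕ} (W : Matrix (Fin n) (Fin m) ℝ)
    (U : Matrix (Fin n) (Fin p) ℝ) (b : Fin n → ℝ) (j : Fin n) :
    ∑ i, |W j i| + ∑ i, |U j i| + |b j| ≤ augRowMax W U b := by
  have hbdd : BddAbove (Set.range fun j : Fin n => ∑ i, |W j i| + ∑ i, |U j i| + |b j|) :=
    Set.Finite.bddAbove (Set.finite_range _)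
  exact le_ciSup hbdd j

lemma augRowMax_nonneg {n m p : ℕ} (W : Matrix (Fin n) (Fin m) ℝ)
    (U : Matrix (Fin n) (Fin p) ℝ) (b : Fin n → ℝ) : 0 ≤ augRowMax W U b := by
  rcases isEmpty_or_nonempty (Fin n) with hE | hNE
  · unfold augRowMax
    rw [Real.iSup_of_isEmpty]
  · obtain ⟨j⟩ := hNE
    refine le_trans ?_ (le_augRowMax W U b j)
    positivity

lemma preact_bound {n m : ℕ} (W : Matrix (Fin n) (Fin m) ℝ) (U : Matrix (Fin n) (Fin n) ℝ)
    (b : Fin n → ℝ) {u : Fin m → ℝ} {h : Fin n → ℝ} (hu : ‖u‖ ≤ 1) (hh : ‖h‖ ≤ 1) (j : Fin n) :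
    |(W.mulVec u + U.mulVec h + b) j| ≤ augRowMax W U b := by
  have hWj : W.mulVec u j = ∑ i, W j i * u i := by
    simp [Matrix.mulVec, dotProduct]
  have hUj : U.mulVec h j = ∑ i, U j i * h i := by
    simp [Matrix.mulVec, dotProduct]
  have hW : |W.mulVec u j| ≤ ∑ i, |W j i| := by
    rw [hWj]
    refine le_trans (Finset.abs_sum_le_sum_abs _ _) (Finset.sum_le_sum fun i _ => ?_)
    rw [abs_mul]
    have h1 : |u i| ≤ 1 := le_trans (norm_le_pi_norm u i) hu
    nlinarith [abs_nonneg (W j i)]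
  have hU : |U.mulVec h j| ≤ ∑ i, |U j i| := by
    rw [hUj]
    refine le_trans (Finset.abs_sum_le_sum_abs _ _) (Finset.sum_le_sum fun i _ => ?_)
    rw [abs_mul]
    have h1 : |h i| ≤ 1 := le_trans (norm_le_pi_norm h i) hh
    nlinarith [abs_nonneg (U j i)]
  calc |(W.mulVec u + U.mulVec h + b) j| = |W.mulVec u j + U.mulVec h j + b j| := rfl
    _ ≤ |W.mulVec u j| + |U.mulVec h j| + |b j| := by
        exact le_trans (abs_add_le _ _) (by linarith [abs_add_le (W.mulVec u j) (U.mulVec h j)])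
    _ ≤ ∑ i, |W j i| + ∑ i, |U j i| + |b j| := by linarith
    _ ≤ augRowMax W U b := le_augRowMax W U b j

/-- Incremental bound -/
theorem stmt_9 {nc nu : ℕ}
    (Wf Wi Wr : Matrix (Fin nc) (Fin nu) ℝ)
    (Uf Ui Ur : Matrix (Fin nc) (Fin nc) ℝ)
    (bf bi br : Fin nc → ℝ)
    (σf σi φr cbar αbar βbar : ℝ)
    (hσf : σf = sigm (augRowMax Wf Uf bf))
    (hσi : σi = sigm (augRowMax Wi Ui bi))
    (hφr : φr = Real.tanh (augRowMax Wr Ur br))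
    (hcbar : cbar = σi * φr / (1 - σf))
    (hαbar : αbar = (1 / 4) * cbar * opNorm2 Uf + σi * opNorm2 Ur + (1 / 4) * φr * opNorm2 Ui)
    (hβbar : βbar = (1 / 4) * cbar * opNorm2 Wf + σi * opNorm2 Wr + (1 / 4) * φr * opNorm2 Wi)
    (ca cb ha hb : Fin nc → ℝ) (ua ub : Fin nu → ℝ)
    (hca : ‖ca‖ ≤ cbar) (hcb : ‖cb‖ ≤ cbar)
    (hha : ‖ha‖ ≤ 1) (hhb : ‖hb‖ ≤ 1)
    (hua : ‖ua‖ ≤ 1) (hub : ‖ub‖ ≤ 1)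
    (caplus cbplus : Fin nc → ℝ)
    (hcaplus : caplus = fun j =>
      sigm ((Wf.mulVec ua + Uf.mulVec ha + bf) j) * ca j +
      sigm ((Wi.mulVec ua + Ui.mulVec ha + bi) j) *
        Real.tanh ((Wr.mulVec ua + Ur.mulVec ha + br) j))
    (hcbplus : cbplus = fun j =>
      sigm ((Wf.mulVec ub + Uf.mulVec hb + bf) j) * cb j +
      sigm ((Wi.mulVec ub + Ui.mulVec hb + bi) j) *
        Real.tanh ((Wr.mulVec ub + Ur.mulVec hb + br) j)) :
    norm2 (fun j => caplus j - cbplus j) ≤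
      σf * norm2 (fun j => ca j - cb j) + αbar * norm2 (fun j => ha j - hb j) +
        βbar * norm2 (fun j => ua j - ub j) := by
  -- abbreviations
  set zfa := Wf.mulVec ua + Uf.mulVec ha + bf with hzfa_def
  set zfb := Wf.mulVec ub + Uf.mulVec hb + bf with hzfb_def
  set zia := Wi.mulVec ua + Ui.mulVec ha + bi with hzia_def
  set zib := Wi.mulVec ub + Ui.mulVec hb + bi with hzib_def
  set zra := Wr.mulVec ua + Ur.mulVec ha + br with hzra_def
  set zrb := Wr.mulVec ub + Ur.mulVec hb + br with hzrb_def
  -- pointwise preactivation bounds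
  have hzfaB : ∀ j, |zfa j| ≤ augRowMax Wf Uf bf := preact_bound Wf Uf bf hua hha
  have hziaB : ∀ j, |zia j| ≤ augRowMax Wi Ui bi := preact_bound Wi Ui bi hua hha
  have hzraB : ∀ j, |zra j| ≤ augRowMax Wr Ur br := preact_bound Wr Ur br hua hha
  have hzrbB : ∀ j, |zrb j| ≤ augRowMax Wr Ur br := preact_bound Wr Ur br hub hhb
  -- sign facts
  have hσf0 : 0 ≤ σf := le_of_lt (hσf ▸ sigm_pos _)
  have hσi0 : 0 ≤ σi := le_of_lt (hσi ▸ sigm_pos _)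
  have hσf1 : σf < 1 := hσf ▸ sigm_lt_one _
  have hφr0 : 0 ≤ φr := by
    rw [hφr, ← tanh_zero']
    exact tanh_mono (augRowMax_nonneg Wr Ur br)
  have hcbar0 : 0 ≤ cbar := by
    rw [hcbar]
    exact div_nonneg (mul_nonneg hσi0 hφr0) (by linarith)
  -- pointwise bounds on gates
  have hfa : ∀ j, sigm (zfa j) ≤ σf := fun j => by
    rw [hσf]; exact sigm_mono (le_trans (le_abs_self _) (hzfaB j))
  have hia : ∀ j, sigm (zia j) ≤ σi := fun j => by
    rw [hσi]; exact sigm_mono (le_trans (le_abs_self _) (hziaB j))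
  have hrb : ∀ j, |Real.tanh (zrb j)| ≤ φr := fun j => by
    rw [hφr]; exact abs_tanh_le (hzrbB j)
  have hcbj : ∀ j, |cb j| ≤ cbar := fun j => le_trans (norm_le_pi_norm cb j) hcb
  -- the four pieces
  set v1 : Fin nc → ℝ := fun j => sigm (zfa j) * (ca j - cb j) with hv1
  set v2 : Fin nc → ℝ := fun j => (sigm (zfa j) - sigm (zfb j)) * cb j with hv2
  set v3 : Fin nc → ℝ := fun j => sigm (zia j) * (Real.tanh (zra j) - Real.tanh (zrb j)) with hv3
  set v4 : Fin nc → ℝ := fun j => (sigm (zia j) - sigm (zib j)) * Real.tanh (zrb j) with hv4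
  have hdecomp : (fun j => caplus j - cbplus j) =
      fun j => v1 j + (v2 j + (v3 j + v4 j)) := by
    funext j
    rw [hcaplus, hcbplus, hv1, hv2, hv3, hv4]
    ring
  -- norms of the differences
  set dc := norm2 (fun j => ca j - cb j) with hdc
  set dh := norm2 (fun j => ha j - hb j) with hdh
  set du := norm2 (fun j => ua j - ub j) with hdu
  have hdc0 : 0 ≤ dc := norm2_nonneg _
  have hdh0 : 0 ≤ dh := norm2_nonneg _
  have hdu0 : 0 ≤ du := norm2_nonneg _
  -- z-difference bounds
  have zdiff : ∀ (W : Matrix (Fin nc) (Fin nu) ℝ) (U : Matrix (Fin nc) (Fin nc) ℝ)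
      (b : Fin nc → ℝ),
      norm2 (fun j => (W.mulVec ua + U.mulVec ha + b) j - (W.mulVec ub + U.mulVec hb + b) j) ≤
        opNorm2 W * du + opNorm2 U * dh := by
    intro W U b
    have heq : (fun j => (W.mulVec ua + U.mulVec ha + b) j - (W.mulVec ub + U.mulVec hb + b) j) =
        fun j => (W.mulVec (fun i => ua i - ub i)) j + (U.mulVec (fun i => ha i - hb i)) j := by
      funext j
      have h1 : W.mulVec (fun i => ua i - ub i) j = W.mulVec ua j - W.mulVec ub j := by
        have : (fun i => ua i - ub i) = ua - ub := rfl
        rw [this, Matrix.mulVec_sub]; rfl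
      have h2 : U.mulVec (fun i => ha i - hb i) j = U.mulVec ha j - U.mulVec hb j := by
        have : (fun i => ha i - hb i) = ha - hb := rfl
        rw [this, Matrix.mulVec_sub]; rfl
      simp only [Pi.add_apply, h1, h2]
      ring
    rw [heq]
    refine le_trans (norm2_add_le _ _) (add_le_add ?_ ?_)
    · exact norm2_mulVec_le W _
    · exact norm2_mulVec_le U _
  have hzf := zdiff Wf Uf bf
  have hzi := zdiff Wi Ui bi
  have hzr := zdiff Wr Ur br
  -- bounds on the four pieces
  have H1 : norm2 v1 ≤ σf * dc := by
    apply norm2_bound hσf0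
    intro j
    rw [hv1, abs_mul, abs_of_pos (sigm_pos _)]
    exact mul_le_mul_of_nonneg_right (hfa j) (abs_nonneg _)
  have H2 : norm2 v2 ≤ 1/4 * cbar * opNorm2 Wf * du + 1/4 * cbar * opNorm2 Uf * dh := by
    have step : norm2 v2 ≤ (1/4 * cbar) * norm2 (fun j => zfa j - zfb j) := by
      apply norm2_bound (by positivity)
      intro j
      rw [hv2, abs_mul]
      calc |sigm (zfa j) - sigm (zfb j)| * |cb j| ≤ (1/4 * |zfa j - zfb j|) * cbar :=
            mul_le_mul (sigm_lipschitz _ _) (hcbj j) (abs_nonneg _) (by positivity)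
        _ = 1/4 * cbar * |zfa j - zfb j| := by ring
    calc norm2 v2 ≤ (1/4 * cbar) * norm2 (fun j => zfa j - zfb j) := step
      _ ≤ (1/4 * cbar) * (opNorm2 Wf * du + opNorm2 Uf * dh) :=
          mul_le_mul_of_nonneg_left hzf (by positivity)
      _ = _ := by ring
  have H3 : norm2 v3 ≤ σi * opNorm2 Wr * du + σi * opNorm2 Ur * dh := by
    have step : norm2 v3 ≤ σi * norm2 (fun j => zra j - zrb j) := by
      apply norm2_bound hσi0
      intro j
      rw [hv3, abs_mul, abs_of_pos (sigm_pos _)]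
      exact mul_le_mul (hia j) (tanh_lipschitz _ _) (abs_nonneg _) hσi0
    calc norm2 v3 ≤ σi * norm2 (fun j => zra j - zrb j) := step
      _ ≤ σi * (opNorm2 Wr * du + opNorm2 Ur * dh) := mul_le_mul_of_nonneg_left hzr hσi0
      _ = _ := by ring
  have H4 : norm2 v4 ≤ 1/4 * φr * opNorm2 Wi * du + 1/4 * φr * opNorm2 Ui * dh := by
    have step : norm2 v4 ≤ (1/4 * φr) * norm2 (fun j => zia j - zib j) := by
      apply norm2_bound (by positivity)
      intro j
      rw [hv4, abs_mul]
      calc |sigm (zia j) - sigm (zib j)| * |Real.tanh (zrb j)| ≤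
            (1/4 * |zia j - zib j|) * φr :=
            mul_le_mul (sigm_lipschitz _ _) (hrb j) (abs_nonneg _) (by positivity)
        _ = 1/4 * φr * |zia j - zib j| := by ring
    calc norm2 v4 ≤ (1/4 * φr) * norm2 (fun j => zia j - zib j) := step
      _ ≤ (1/4 * φr) * (opNorm2 Wi * du + opNorm2 Ui * dh) :=
          mul_le_mul_of_nonneg_left hzi (by positivity)
      _ = _ := by ring
  -- assemble
  have Htri : norm2 (fun j => caplus j - cbplus j) ≤
      norm2 v1 + (norm2 v2 + (norm2 v3 + norm2 v4)) := by
    rw [hdecomp]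
    refine le_trans (norm2_add_le v1 (fun j => v2 j + (v3 j + v4 j))) ?_
    refine add_le_add_right ?_ _
    refine le_trans (norm2_add_le v2 (fun j => v3 j + v4 j)) ?_
    exact add_le_add_right (norm2_add_le v3 v4) _
  rw [hαbar, hβbar]
  linarith [H1, H2, H3, H4, Htri]
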